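/- Let Ω ⊂ ℝⁿ be compact with diameter δ, let m > 0, and for each N let χ^{(N)} : ℝⁿ → ℝ satisfy 0 ≤ χ^{(N)} ≤ 1 with supp χ^{(N)} ⊆ Ω_{1/N³}. Fix ξ ≠ 0 and t > mδ/|ξ|. Define Θ_{0,N}(x) = ∏_{k=0}^{N} χ^{(N)}(x + (k t/(N m)) ξ). Then there exists N₀ such that Θ_{0,N} ≡ 0 on ℝⁿ for all N ≥ N₀. -/
import Mathlib


open Metric Finset

/-- Classical Zeno symbol vanishes: with `χ^{(N)}` supported in `Ω_{1/N³}`,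
`0 ≤ χ^{(N)} ≤ 1`, `ξ ≠ 0` and `t > m * diam Ω / ‖ξ‖`, the product
`Θ_{0,N}(x) = ∏_{k=0}^{N} χ^{(N)}(x + (k t/(N m)) ξ)` is identically zero for
all sufficiently large `N`. -/
theorem zeroth_symbol_vanishes {n : ℕ} (Ω : Set (EuclideanSpace ℝ (Fin n)))
    (hΩ : IsCompact Ω) (m : ℝ) (hm : 0 < m)
    (χ : ℕ → EuclideanSpace ℝ (Fin n) → ℝ)
    (hχ0 : ∀ N x, 0 ≤ χ N x) (hχ1 : ∀ N x, χ N x ≤ 1)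
    (hsupp : ∀ N x, χ N x ≠ 0 → x ∈ Metric.thickening (1 / (N : ℝ) ^ 3) Ω)
    (ξ : EuclideanSpace ℝ (Fin n)) (hξ : ξ ≠ 0)
    (t : ℝ) (ht : t > m * Metric.diam Ω / ‖ξ‖) :
    ∃ N₀ : ℕ, ∀ N ≥ N₀, ∀ x,
      (∏ k ∈ Finset.range (N + 1), χ N (x + (((k : ℝ) * t / ((N : ℝ) * m)) • ξ))) = 0 := by
  have hξ' : 0 < ‖ξ‖ := norm_pos_iff.mpr hξ
  have hgap : Metric.diam Ω < t * ‖ξ‖ / m := by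
    rw [lt_div_iff₀ hm]
    have h1 : m * Metric.diam Ω < t * ‖ξ‖ := by
      have := (div_lt_iff₀ hξ').mp ht
      linarith
    linarith
  set g : ℝ := t * ‖ξ‖ / m - Metric.diam Ω with hg
  have hgpos : 0 < g := by simp [hg]; linarith
  obtain ⟨N₁, hN₁⟩ := exists_nat_gt (2 / g)
  refine ⟨max N₁ 1, fun N hN x => ?_⟩
  have hN1 : (1 : ℕ) ≤ N := le_trans (le_max_right _ _) hN
  have hNpos : (0 : ℝ) < N := by exact_mod_cast hN1
  by_contra h
  have hk : ∀ k ∈ Finset.range (N + 1),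
      χ N (x + (((k : ℝ) * t / ((N : ℝ) * m)) • ξ)) ≠ 0 := by
    intro k hk h0
    exact h (Finset.prod_eq_zero hk h0)
  have h0 := hsupp N _ (hk 0 (Finset.mem_range.mpr (Nat.succ_pos N)))
  have hNt := hsupp N _ (hk N (Finset.mem_range.mpr (Nat.lt_succ_self N)))
  rw [Metric.mem_thickening_iff] at h0 hNt
  obtain ⟨z₀, hz₀, hd₀⟩ := h0
  simp only [Nat.cast_zero] at hd₀
  obtain ⟨z₁, hz₁, hd₁⟩ := hNt
  have hzz : dist z₀ z₁ ≤ Metric.diam Ω := Metric.dist_le_diam_of_mem hΩ.isBounded hz₀ hz₁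
  -- distance between the two shifted points
  have hdd : dist (x + (((0 : ℝ) * t / ((N : ℝ) * m)) • ξ))
      (x + ((((N : ℕ) : ℝ) * t / ((N : ℝ) * m)) • ξ)) = t * ‖ξ‖ / m := by
    rw [dist_eq_norm]
    have : (x + (((0 : ℝ) * t / ((N : ℝ) * m)) • ξ))
        - (x + ((((N : ℕ) : ℝ) * t / ((N : ℝ) * m)) • ξ))
        = (-(t / m)) • ξ := by
      have hNm : ((N : ℝ) * t / ((N : ℝ) * m)) = t / m :=
        mul_div_mul_left t m (ne_of_gt hNpos)
      rw [hNm]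
      module
    rw [this, norm_smul]
    rw [Real.norm_eq_abs, abs_neg, abs_div, abs_of_pos hm]
    rw [div_mul_eq_mul_div]
    congr 1
    have ht0 : 0 < t := lt_of_le_of_lt (by positivity) ht
    rw [abs_of_pos ht0]
  -- small thickening bound
  have hN1' : (1 : ℝ) ≤ (N : ℝ) := by exact_mod_cast hN1
  have hsmall : 1 / (N : ℝ) ^ 3 ≤ 1 / (N : ℝ) := by
    exact one_div_le_one_div_of_le hNpos (le_self_pow₀ hN1' (by norm_num))
  have hNbig : 2 / g < (N : ℝ) := lt_of_lt_of_le hN₁ (by exact_mod_cast le_trans (le_max_left _ _) hN)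
  have h2N : 2 / (N : ℝ) < g := by
    rw [div_lt_iff₀ hNpos]
    rw [div_lt_iff₀ hgpos] at hNbig
    linarith
  have htri := dist_triangle4 (x + (((0 : ℝ) * t / ((N : ℝ) * m)) • ξ)) z₀ z₁
      (x + ((((N : ℕ) : ℝ) * t / ((N : ℝ) * m)) • ξ))
  rw [hdd] at htri
  have hd₁' : dist z₁ (x + ((((N : ℕ) : ℝ) * t / ((N : ℝ) * m)) • ξ)) < 1 / (N : ℝ) ^ 3 := by
    rw [dist_comm]; exact hd₁
  have hr : 2 / (N : ℝ) = 1 / (N : ℝ) + 1 / (N : ℝ) := by ring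
  have : t * ‖ξ‖ / m < 2 / (N : ℝ) + Metric.diam Ω := by
    linarith [hsmall]
  have : t * ‖ξ‖ / m < g + Metric.diam Ω := by linarith
  simp [hg] at this
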